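/- Let A be a unital C*-algebra, G a finite group, and β : G → Aut(A) an action. Suppose B ⊆ A is a unital G-invariant C*-subalgebra such that the restricted action of G on B has Rokhlin dimension at most d, and suppose there exists a sequence of automorphisms (α_n) of A with each α_n commuting with β (α_n ∘ β_g = β_g ∘ α_n for all g) and with the property that for every b ∈ B and a ∈ A, ‖[α_n(b), a]‖ → 0 as n → ∞. Then the action β on A has Rokhlin dimension at most d. -/

import Mathlib

section Aux

variable {A : Type*} [NormedRing A] [StarRing A] [CStarRing A]
    [CompleteSpace A] [NormedAlgebra ℂ A] [StarModule ℂ A]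

/-- A star-algebra automorphism of a C*-algebra is isometric. -/
lemma starAlgEquiv_norm_map (φ : A ≃⋆ₐ[ℂ] A) (x : A) : ‖φ x‖ = ‖x‖ := by
  letI : CStarAlgebra A := { }
  exact NonUnitalStarAlgHom.norm_map φ φ.injective x

/-- A star-ring equivalence preserves nonnegativity in a star-ordered ring. -/
lemma starAlgEquiv_map_nonneg [PartialOrder A] [StarOrderedRing A]
    (φ : A ≃⋆ₐ[ℂ] A) {x : A} (hx : 0 ≤ x) : 0 ≤ φ x := by
  rw [StarOrderedRing.nonneg_iff] at hx ⊢
  induction hx using AddSubmonoid.closure_induction with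
  | mem y hy =>
    obtain ⟨s, rfl⟩ := hy
    exact AddSubmonoid.subset_closure ⟨φ s, by simp [map_mul, map_star]⟩
  | zero => simpa using AddSubmonoid.zero_mem _
  | add a b _ _ ha hb => simpa [map_add] using AddSubmonoid.add_mem _ ha hb

end Aux

/-- Abstraction of Lemma 4.2/Corollary 4.4: finite Rokhlin dimension for the action
restricted to an invariant unital subalgebra, together with a sequence of equivariant
automorphisms asymptotically centralizing the subalgebra, gives finite Rokhlin
dimension on the whole algebra. -/
theorem stmt17 {A : Type*} [NormedRing A] [StarRing A] [CStarRing A]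
    [CompleteSpace A] [NormedAlgebra ℂ A] [StarModule ℂ A]
    [PartialOrder A] [StarOrderedRing A]
    {G : Type*} [Group G] [Fintype G]
    (β : G → A ≃⋆ₐ[ℂ] A) (hβmul : ∀ (g h : G) (x : A), β (g * h) x = β g (β h x))
    (B : StarSubalgebra ℂ A) (hBinv : ∀ (g : G), ∀ b ∈ B, β g b ∈ B)
    (d : ℕ)
    (hrokB : ∀ ε : ℝ, 0 < ε → ∀ F : Finset A, (∀ a ∈ F, a ∈ B) →
      ∃ f : Fin (d + 1) → G → A,
        (∀ l g, f l g ∈ B ∧ 0 ≤ f l g ∧ ‖f l g‖ ≤ 1) ∧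
        (∀ l (g h : G), g ≠ h → ‖f l g * f l h‖ < ε) ∧
        ‖(∑ l, ∑ g, f l g) - 1‖ < ε ∧
        (∀ l (g h : G), ‖β h (f l g) - f l (h * g)‖ < ε) ∧
        (∀ l g, ∀ a ∈ F, ‖f l g * a - a * f l g‖ < ε))
    (α : ℕ → A ≃⋆ₐ[ℂ] A)
    (hαβ : ∀ (n : ℕ) (g : G) (x : A), α n (β g x) = β g (α n x))
    (hαc : ∀ b ∈ B, ∀ a : A,
      Filter.Tendsto (fun n => ‖α n b * a - a * α n b‖) Filter.atTop (nhds 0)) :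
    ∀ ε : ℝ, 0 < ε → ∀ F : Finset A,
      ∃ f : Fin (d + 1) → G → A,
        (∀ l g, 0 ≤ f l g ∧ ‖f l g‖ ≤ 1) ∧
        (∀ l (g h : G), g ≠ h → ‖f l g * f l h‖ < ε) ∧
        ‖(∑ l, ∑ g, f l g) - 1‖ < ε ∧
        (∀ l (g h : G), ‖β h (f l g) - f l (h * g)‖ < ε) ∧
        (∀ l g, ∀ a ∈ F, ‖f l g * a - a * f l g‖ < ε) := by
  intro ε hε F
  obtain ⟨f, hf1, hf2, hf3, hf4, hf5⟩ := hrokB ε hε ∅ (by simp)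
  have hev : ∀ᶠ n in Filter.atTop, ∀ l g, ∀ a ∈ F,
      ‖α n (f l g) * a - a * α n (f l g)‖ < ε := by
    rw [Filter.eventually_all]
    intro l
    rw [Filter.eventually_all]
    intro g
    rw [Filter.eventually_all_finset]
    intro a _
    exact (hαc (f l g) (hf1 l g).1 a).eventually_lt_const hε
  obtain ⟨n, hn⟩ := hev.exists
  refine ⟨fun l g => α n (f l g), ?_, ?_, ?_, ?_, ?_⟩
  · intro l g
    exact ⟨starAlgEquiv_map_nonneg _ (hf1 l g).2.1,
      by rw [starAlgEquiv_norm_map]; exact (hf1 l g).2.2⟩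
  · intro l g h hgh
    rw [← map_mul, starAlgEquiv_norm_map]
    exact hf2 l g h hgh
  · have : (∑ l, ∑ g, α n (f l g)) - 1 = α n ((∑ l, ∑ g, f l g) - 1) := by
      simp [map_sub, map_sum]
    rw [this, starAlgEquiv_norm_map]
    exact hf3
  · intro l g h
    rw [← hαβ, ← map_sub, starAlgEquiv_norm_map]
    exact hf4 l g h
  · exact hn
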